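/- Let V be a finite set of cardinality n, let A₁ ⊆ A₂ ⊆ ⋯ ⊆ Aₘ and B₁ ⊇ B₂ ⊇ ⋯ ⊇ Bₚ be two chains of subsets of V such that for all i, j: if Aᵢ ∩ Bⱼ ≠ ∅ then Aᵢ ∪ Bⱼ = V. Then there exists a bijection f : V → {1,…,n} such that f(Aᵢ) = {1, 2, …, |Aᵢ|} for every i and f(Bⱼ) = {n − |Bⱼ| + 1, …, n} for every j. -/
import Mathlib

/-- The image of a "lower" set under an equivalence with `Fin n` that respects it
is an initial interval. -/
lemma aux_lower_stmt6 {V : Type*} [Fintype V] {n : ℕ} (e : V ≃ Fin n)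
    (S : Set V) (hS : ∀ x ∈ S, ∀ y, y ∉ S → e x < e y) :
    ⇑e '' S = {k : Fin n | (k : ℕ) < S.ncard} := by
  ext k
  simp only [Set.mem_image, Set.mem_setOf_eq]
  constructor
  · rintro ⟨x, hx, rfl⟩
    have hsub : Set.Iic (e x) ⊆ ⇑e '' S := by
      intro j hj
      obtain ⟨z, rfl⟩ := e.surjective j
      refine ⟨z, ?_, rfl⟩
      by_contra hz
      exact absurd hj (not_le.2 (hS x hx z hz))
    have h1 : (Set.Iic (e x)).ncard ≤ (⇑e '' S).ncard :=
      Set.ncard_le_ncard hsub (Set.toFinite _)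
    have h2 : (⇑e '' S).ncard = S.ncard := Set.ncard_image_of_injective _ e.injective
    have h3 : (Set.Iic (e x)).ncard = (e x : ℕ) + 1 := by
      rw [← Finset.coe_Iic, Set.ncard_coe_finset, Fin.card_Iic]
    omega
  · intro hk
    by_contra hcon
    push_neg at hcon
    have hsub : ⇑e '' S ⊆ Set.Iio k := by
      rintro _ ⟨x, hx, rfl⟩
      rcases lt_or_ge (e x) k with h1 | h1
      · exact h1
      · exfalso
        obtain ⟨z, rfl⟩ := e.surjective k
        have hz : z ∉ S := fun hz => hcon z hz rfl
        exact absurd (hS x hx z hz) (not_lt.2 h1)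
    have h1 := Set.ncard_le_ncard hsub (Set.toFinite _)
    rw [Set.ncard_image_of_injective _ e.injective] at h1
    have h3 : (Set.Iio k).ncard = (k : ℕ) := by
      rw [← Finset.coe_Iio, Set.ncard_coe_finset, Fin.card_Iio]
    omega

/-- The image of an "upper" set under an equivalence with `Fin n` that respects it
is a terminal interval. -/
lemma aux_upper_stmt6 {V : Type*} [Fintype V] {n : ℕ} (hn : Fintype.card V = n)
    (e : V ≃ Fin n) (S : Set V) (hS : ∀ x ∈ S, ∀ y, y ∉ S → e y < e x) :
    ⇑e '' S = {k : Fin n | n - S.ncard ≤ (k : ℕ)} := by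
  have hcompl : ⇑e '' Sᶜ = {k : Fin n | (k : ℕ) < Sᶜ.ncard} :=
    aux_lower_stmt6 e Sᶜ (fun x hx y hy => hS y (not_not.1 hy) x hx)
  have himg : ⇑e '' Sᶜ = (⇑e '' S)ᶜ := Set.image_compl_eq e.bijective
  have hsum : S.ncard + Sᶜ.ncard = n := by
    rw [Set.ncard_add_ncard_compl, Nat.card_eq_fintype_card, hn]
  have hle : S.ncard ≤ n := by omega
  ext k
  have h4 : k ∉ ⇑e '' S ↔ (k : ℕ) < Sᶜ.ncard := by
    rw [← Set.mem_compl_iff, ← himg, hcompl]; rfl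
  have h5 : k ∈ ⇑e '' S ↔ Sᶜ.ncard ≤ (k : ℕ) := by
    rw [← not_lt, ← h4, not_not]
  simp only [Set.mem_setOf_eq]
  rw [h5]
  omega

/-- Two flags, an increasing one and a decreasing one, such that any two members that
meet must cover `V`, can be simultaneously realized as initial and terminal intervals. -/
theorem stmt_6 {V : Type*} [Fintype V] {m p : ℕ}
    (A : Fin m → Set V) (B : Fin p → Set V)
    (hA : Monotone A) (hB : Antitone B)
    (h : ∀ i j, (A i ∩ B j).Nonempty → A i ∪ B j = Set.univ) :
    ∃ f : V ≃ Fin (Fintype.card V),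
      (∀ i, ⇑f '' A i = {k : Fin (Fintype.card V) | (k : ℕ) < (A i).ncard}) ∧
      (∀ j, ⇑f '' B j = {k : Fin (Fintype.card V) |
        Fintype.card V - (B j).ncard ≤ (k : ℕ)}) := by
  classical
  set n := Fintype.card V with hn
  -- counting functions
  let a : V → ℕ := fun x => (Finset.univ.filter fun i => x ∈ A i).card
  let b : V → ℕ := fun x => (Finset.univ.filter fun j => x ∈ B j).card
  have ha_le : ∀ x, a x ≤ m := fun x => le_trans (Finset.card_filter_le _ _) (by simp)
  have hb_le : ∀ x, b x ≤ p := fun x => le_trans (Finset.card_filter_le _ _) (by simp)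
  have haA : ∀ {x y : V} {i}, x ∈ A i → y ∉ A i → a y < a x := by
    intro x y i hx hy
    apply Finset.card_lt_card
    rw [Finset.ssubset_iff_of_subset]
    · exact ⟨i, by simp [hx], by simp [hy]⟩
    · intro i' hi'
      simp only [Finset.mem_filter, Finset.mem_univ, true_and] at hi' ⊢
      rcases le_total i' i with h1 | h1
      · exact absurd (hA h1 hi') hy
      · exact hA h1 hx
  have hbB : ∀ {x y : V} {j}, x ∈ B j → y ∉ B j → b y < b x := by
    intro x y j hx hy
    apply Finset.card_lt_card
    rw [Finset.ssubset_iff_of_subset]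
    · exact ⟨j, by simp [hx], by simp [hy]⟩
    · intro j' hj'
      simp only [Finset.mem_filter, Finset.mem_univ, true_and] at hj' ⊢
      rcases le_total j j' with h1 | h1
      · exact absurd (hB h1 hj') hy
      · exact hB h1 hx
  have hexA : ∀ {x y : V}, a y < a x → ∃ i, x ∈ A i ∧ y ∉ A i := by
    intro x y hxy
    by_contra hc
    push_neg at hc
    have : a x ≤ a y := Finset.card_le_card (by
      intro i hi
      simp only [Finset.mem_filter, Finset.mem_univ, true_and] at hi ⊢
      exact hc i hi)
    omega
  have hexB : ∀ {x y : V}, b y < b x → ∃ j, x ∈ B j ∧ y ∉ B j := by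
    intro x y hxy
    by_contra hc
    push_neg at hc
    have : b x ≤ b y := Finset.card_le_card (by
      intro j hj
      simp only [Finset.mem_filter, Finset.mem_univ, true_and] at hj ⊢
      exact hc j hj)
    omega
  -- key compatibility
  have hab : ∀ {x y : V}, b y < b x → a x ≤ a y := by
    intro x y hxy
    by_contra hc
    push_neg at hc
    obtain ⟨i, hxi, hyi⟩ := hexA hc
    obtain ⟨j, hxj, hyj⟩ := hexB hxy
    have := h i j ⟨x, hxi, hxj⟩
    have : y ∈ A i ∪ B j := this ▸ Set.mem_univ y
    rcases this with h1 | h1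
    · exact hyi h1
    · exact hyj h1
  -- the primary key
  let K : V → ℕ := fun x => (m - a x) * (p + 1) + b x
  have hKA : ∀ {x y : V} {i}, x ∈ A i → y ∉ A i → K x < K y := by
    intro x y i hx hy
    have h1 : a y < a x := haA hx hy
    have h2 : m - a x + 1 ≤ m - a y := by have := ha_le x; omega
    calc (m - a x) * (p + 1) + b x < (m - a x) * (p + 1) + (p + 1) := by
          have := hb_le x; omega
      _ = (m - a x + 1) * (p + 1) := by ring
      _ ≤ (m - a y) * (p + 1) := Nat.mul_le_mul_right _ h2
      _ ≤ (m - a y) * (p + 1) + b y := Nat.le_add_right _ _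
  have hKB : ∀ {x y : V} {j}, x ∈ B j → y ∉ B j → K y < K x := by
    intro x y j hx hy
    have h1 : b y < b x := hbB hx hy
    have h2 : a x ≤ a y := hab h1
    have h3 : m - a y ≤ m - a x := Nat.sub_le_sub_left h2 m
    calc (m - a y) * (p + 1) + b y ≤ (m - a x) * (p + 1) + b y :=
          Nat.add_le_add_right (Nat.mul_le_mul_right _ h3) _
      _ < (m - a x) * (p + 1) + b x := Nat.add_lt_add_left h1 _
  -- tie-breaking
  let g : V ≃ Fin n := Fintype.equivFin V
  let key : V → ℕ := fun x => K x * n + (g x : ℕ)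
  have hkeymono : ∀ {x y : V}, K x < K y → key x < key y := by
    intro x y hxy
    have h1 : (g x : ℕ) < n := (g x).isLt
    calc K x * n + (g x : ℕ) < K x * n + n := by omega
      _ = (K x + 1) * n := by ring
      _ ≤ K y * n := Nat.mul_le_mul_right _ hxy
      _ ≤ K y * n + (g y : ℕ) := Nat.le_add_right _ _
  have hkey_inj : Function.Injective key := by
    intro x y hxy
    have e1 : key x % n = (g x : ℕ) := by
      show (K x * n + (g x : ℕ)) % n = _
      rw [Nat.mul_add_mod', Nat.mod_eq_of_lt (g x).isLt]
    have e2 : key y % n = (g y : ℕ) := by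
      show (K y * n + (g y : ℕ)) % n = _
      rw [Nat.mul_add_mod', Nat.mod_eq_of_lt (g y).isLt]
    apply g.injective
    apply Fin.ext
    rw [← e1, ← e2, hxy]
  letI lo : LinearOrder V := LinearOrder.lift' key hkey_inj
  have hlt : ∀ x y : V, x < y ↔ key x < key y := fun x y => Iff.rfl
  let f : V ≃o Fin n := (monoEquivOfFin V hn.symm).symm
  refine ⟨f.toEquiv, ?_, ?_⟩
  · intro i
    apply aux_lower_stmt6
    intro x hx y hy
    exact f.strictMono ((hlt x y).2 (hkeymono (hKA hx hy)))
  · intro j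
    apply aux_upper_stmt6 hn.symm
    intro x hx y hy
    exact f.strictMono ((hlt y x).2 (hkeymono (hKB hx hy)))
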